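/- The tensor fields A_1^s on P_1 and A_2^s on P_2 satisfy condition (C2): A_1^s is positive semidefinite and degenerate at b_1, and for any two pairs of distinct indices (i,j), (k,l) in Ω_3, all α, u ∈ (0,1) and all permutations σ of Ω_3, A_2^s( dH^{σ(i)σ(j)}_{ψ_u^σ(α)}((Z_1^1)_{u_α^{ij}}), dH^{σ(k)σ(l)}_{ψ_u^σ(α)}((Z_1^1)_{u_α^{kl}}) ) = sgn(2u_α^{ij}−1)·√(A_1^s(Z_1^1,Z_1^1)_{p_{u_α^{ij}}}) · sgn(2u_α^{kl}−1)·√(A_1^s(Z_1^1,Z_1^1)_{p_{u_α^{kl}}}), with sgn(0) := 0. -/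

import Mathlib

open Finset

noncomputable section

/-- `Psim n` is the space `P_n` of positive probability measures on
`Ω_{n+1} = {1,…,n+1}`, viewed as a subset of `ℝ^{n+1}`. -/
def Psim (n : ℕ) : Set (Fin (n + 1) → ℝ) :=
  {p | (∀ i, p i ∈ Set.Ioo (0 : ℝ) 1) ∧ ∑ i, p i = 1}

/-- The tangent space of `P_n` (at any point): vectors in `ℝ^{n+1}` whose
coordinates sum to zero. -/
def Tang (n : ℕ) : Set (Fin (n + 1) → ℝ) :=
  {X | ∑ i, X i = 0}

/-- `B` is a symmetric bilinear form on `ℝ^{n+1}` (the value of a symmetric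
`(0,2)`-tensor field at a point). -/
def IsSymmBilin {n : ℕ} (B : (Fin (n + 1) → ℝ) → (Fin (n + 1) → ℝ) → ℝ) : Prop :=
  (∀ X Y, B X Y = B Y X) ∧
  (∀ (c : ℝ) (X X' Y : Fin (n + 1) → ℝ), B (c • X + X') Y = c * B X Y + B X' Y)

/-- `A` is a family of symmetric `(0,2)`-tensor fields `A_n` on `P_n`
(indices `n ≥ 1`, matching the paper's `ℕ = {1,2,…}`). -/
def SymmTF (A : (n : ℕ) → (Fin (n + 1) → ℝ) → (Fin (n + 1) → ℝ) → (Fin (n + 1) → ℝ) → ℝ) :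
    Prop :=
  ∀ n : ℕ, 0 < n → ∀ p ∈ Psim n, IsSymmBilin (A n p)

/-- The scalar patched Markov embedding `G_n^{α,σ} : P_n → P_{n+1}`,
`G_n^{α,σ}(p) = α ∑_{i ∈ Ω_{n+1}} p(i) δ_{σ(i)} + (1-α) δ_{σ(n+2)}`. -/
def sPatch (n : ℕ) (α : ℝ) (σ : Equiv.Perm (Fin (n + 2))) (p : Fin (n + 1) → ℝ) :
    Fin (n + 2) → ℝ := fun I =>
  α * ∑ i : Fin (n + 1), p i * (if σ i.castSucc = I then 1 else 0) +
    (1 - α) * (if σ (Fin.last (n + 1)) = I then 1 else 0)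

/-- The differential of `G_n^{α,σ}`: `dG(X) = α ∑_i X^i δ_{σ(i)}`. -/
def sPatchD (n : ℕ) (α : ℝ) (σ : Equiv.Perm (Fin (n + 2))) (X : Fin (n + 1) → ℝ) :
    Fin (n + 2) → ℝ := fun I =>
  α * ∑ i : Fin (n + 1), X i * (if σ i.castSucc = I then 1 else 0)

/-- A general patched Markov embedding `G_n : P_n → P_{n+1}` with weights `a_i`:
`G_n(p) = ∑_i p(i) (a_i δ_{σ(i)} + (1-a_i) δ_{σ(n+2)})`. -/
def patch (n : ℕ) (a : Fin (n + 1) → ℝ) (σ : Equiv.Perm (Fin (n + 2)))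
    (p : Fin (n + 1) → ℝ) : Fin (n + 2) → ℝ := fun I =>
  ∑ i : Fin (n + 1), p i * (a i * (if σ i.castSucc = I then 1 else 0) +
    (1 - a i) * (if σ (Fin.last (n + 1)) = I then 1 else 0))

/-- The differential of a patched Markov embedding. -/
def patchD (n : ℕ) (a : Fin (n + 1) → ℝ) (σ : Equiv.Perm (Fin (n + 2)))
    (X : Fin (n + 1) → ℝ) : Fin (n + 2) → ℝ := fun I =>
  ∑ i : Fin (n + 1), X i * (a i * (if σ i.castSucc = I then 1 else 0) +
    (1 - a i) * (if σ (Fin.last (n + 1)) = I then 1 else 0))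

/-- Invariance of the family `{A_n}` under scalar patched Markov embeddings:
the pullback of `A_{n+1}` by each `G_n^{α,σ}` equals `A_n`. -/
def InvariantSP
    (A : (n : ℕ) → (Fin (n + 1) → ℝ) → (Fin (n + 1) → ℝ) → (Fin (n + 1) → ℝ) → ℝ) : Prop :=
  ∀ n : ℕ, 0 < n → ∀ α ∈ Set.Ioo (0 : ℝ) 1, ∀ σ : Equiv.Perm (Fin (n + 2)),
    ∀ p ∈ Psim n, ∀ X ∈ Tang n, ∀ Y ∈ Tang n,
      A (n + 1) (sPatch n α σ p) (sPatchD n α σ X) (sPatchD n α σ Y) = A n p X Y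

/-- The vector field `Z_i^n` on `P_n`, with (constant) coordinates
`e_i - (1/(n+1)) ∑_j e_j`. -/
def Zvec (n : ℕ) (i : Fin (n + 1)) : Fin (n + 1) → ℝ :=
  fun k => (if k = i then 1 else 0) - 1 / (n + 1)

/-- The uniform probability measure `b_n ∈ P_n`. -/
def bunif (n : ℕ) : Fin (n + 1) → ℝ := fun _ => 1 / (n + 1)

/-- The point `p_u ∈ P_1`: `p_u(1) = u`, `p_u(2) = 1 - u`. -/
def pu (u : ℝ) : Fin 2 → ℝ := ![u, 1 - u]

/-- The tensor field `A_n^d(X,Y)_p = ∑_i X^i Y^i / p(i)²`. -/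
def Ad (n : ℕ) (p X Y : Fin (n + 1) → ℝ) : ℝ := ∑ i, X i * Y i / (p i) ^ 2

/-- The tensor field `A_n^s(X,Y)_p = (∑_i X^i/p(i)) (∑_j Y^j/p(j))`. -/
def As (n : ℕ) (p X Y : Fin (n + 1) → ℝ) : ℝ := (∑ i, X i / p i) * (∑ j, Y j / p j)

/-- The Fisher metric `g_n^F(X,Y)_p = ∑_i X^i Y^i / p(i)`. -/
def Fish (n : ℕ) (p X Y : Fin (n + 1) → ℝ) : ℝ := ∑ i, X i * Y i / p i

/-- The point `ψ_u^σ(α) = G_1^{α,σ}(p_u) ∈ P_2` (the indices `1,2,3` of `Ω_3`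
are `0,1,2 : Fin 3`). -/
def psiPt (α u : ℝ) (σ : Equiv.Perm (Fin 3)) : Fin 3 → ℝ := sPatch 1 α σ (pu u)

/-- `E^k ⊂ TP_2`: the line spanned by `Z_i^2 - Z_j^2 = e_i - e_j` where
`{i,j,k} = {0,1,2}`; equivalently, the sum-zero vectors vanishing at `k`. -/
def Esub (k : Fin 3) : Set (Fin 3 → ℝ) := {W | (∑ i, W i = 0) ∧ W k = 0}

/-- `u_α^{ij}` (formed with `σ = id`). -/
def uRatio (α u : ℝ) (i j : Fin 3) : ℝ :=
  psiPt α u (Equiv.refl (Fin 3)) i /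
    (psiPt α u (Equiv.refl (Fin 3)) i + psiPt α u (Equiv.refl (Fin 3)) j)

/-- The image `dH^{ij}_q(Z_1^1) = ((q(i)+q(j))/2) (Z_i^2 - Z_j^2)` of `Z_1^1`
under the differential of `H_q^{ij} : P_1 → P_2`. -/
def dHvec (q : Fin 3 → ℝ) (i j : Fin 3) : Fin 3 → ℝ :=
  ((q i + q j) / 2) • (Zvec 2 i - Zvec 2 j)

/-- Condition (C1) for `A_2`. -/
def CondC1 (A2 : (Fin 3 → ℝ) → (Fin 3 → ℝ) → (Fin 3 → ℝ) → ℝ) : Prop :=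
  ∃ r : ℝ → ℝ, (∀ t : ℝ, 0 < t → 0 < r t) ∧ (∀ t : ℝ, 0 < t → r t * r (1 / t) = 1) ∧
    ∀ α ∈ Set.Ioo (0 : ℝ) 1, ∀ u ∈ Set.Ioo (0 : ℝ) 1, ∀ σ : Equiv.Perm (Fin 3),
      ∀ W1 W2 W3 : Fin 3 → ℝ, W1 ∈ Esub (σ 0) → W2 ∈ Esub (σ 1) → W3 ∈ Esub (σ 2) →
        W3 = W1 + W2 →
        A2 (psiPt α u σ) W3 W1 = r (u / (1 - u)) * A2 (psiPt α u σ) W3 W2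

/-- Condition (C2) for `A_1` and `A_2`: `A_1` is positive semidefinite and
degenerate at `b_1`, and the parallelism identity holds. -/
def CondC2 (A1 : (Fin 2 → ℝ) → (Fin 2 → ℝ) → (Fin 2 → ℝ) → ℝ)
    (A2 : (Fin 3 → ℝ) → (Fin 3 → ℝ) → (Fin 3 → ℝ) → ℝ) : Prop :=
  (∀ p ∈ Psim 1, ∀ X ∈ Tang 1, 0 ≤ A1 p X X) ∧
  (∃ X ∈ Tang 1, X ≠ 0 ∧ ∀ Y ∈ Tang 1, A1 (bunif 1) X Y = 0) ∧
  (∀ α ∈ Set.Ioo (0 : ℝ) 1, ∀ u ∈ Set.Ioo (0 : ℝ) 1, ∀ σ : Equiv.Perm (Fin 3),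
    ∀ i j k l : Fin 3, i ≠ j → k ≠ l →
      A2 (psiPt α u σ) (dHvec (psiPt α u σ) (σ i) (σ j)) (dHvec (psiPt α u σ) (σ k) (σ l)) =
        (Real.sign (2 * uRatio α u i j - 1) *
            Real.sqrt (A1 (pu (uRatio α u i j)) (Zvec 1 0) (Zvec 1 0))) *
        (Real.sign (2 * uRatio α u k l - 1) *
            Real.sqrt (A1 (pu (uRatio α u k l)) (Zvec 1 0) (Zvec 1 0))))

/-- `H : P_m → P_n` (together with its linear differential `dH`) is a
composition of scalar patched Markov embeddings. -/
inductive IsSPMComp :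
    (m n : ℕ) → ((Fin (m + 1) → ℝ) → (Fin (n + 1) → ℝ)) →
      ((Fin (m + 1) → ℝ) → (Fin (n + 1) → ℝ)) → Prop
  | refl (m : ℕ) : IsSPMComp m m id id
  | step {m n : ℕ} {H dH : (Fin (m + 1) → ℝ) → (Fin (n + 1) → ℝ)} (α : ℝ)
      (hα : α ∈ Set.Ioo (0 : ℝ) 1) (σ : Equiv.Perm (Fin (n + 2)))
      (h : IsSPMComp m n H dH) :
      IsSPMComp m (n + 1) (fun p => sPatch n α σ (H p)) (fun X => sPatchD n α σ (dH X))

/-- `Q` is a Markov partition: each `Q i` is a probability measure on `Ω_{N+1}`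
and the supports of the `Q i` are pairwise disjoint with union `Ω_{N+1}`. -/
def IsMarkovPartition {n N : ℕ} (Q : Fin (n + 1) → Fin (N + 1) → ℝ) : Prop :=
  (∀ i, (∀ I, 0 ≤ Q i I) ∧ ∑ I, Q i I = 1) ∧ (∀ I, ∃! i, Q i I ≠ 0)

/-- The Markov embedding `F(p) = ∑_i p(i) Q_i` induced by `Q` (the same formula
gives its differential on tangent vectors). -/
def mEmb {n N : ℕ} (Q : Fin (n + 1) → Fin (N + 1) → ℝ) (p : Fin (n + 1) → ℝ) :
    Fin (N + 1) → ℝ := fun I => ∑ i, p i * Q i I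

/-- `A_n^{λ,μ} = λ A_n^d + μ A_n^s`. -/
def Alm (n : ℕ) (lam mu : ℝ) (p X Y : Fin (n + 1) → ℝ) : ℝ :=
  lam * Ad n p X Y + mu * As n p X Y
/-- `A_1^s` and `A_2^s` satisfy condition (C2). -/
lemma psi_refl_pos (α u : ℝ) (hα : α ∈ Set.Ioo (0:ℝ) 1) (hu : u ∈ Set.Ioo (0:ℝ) 1)
    (m : Fin 3) : 0 < psiPt α u (Equiv.refl (Fin 3)) m := by
  obtain ⟨hα0, hα1⟩ := hα
  obtain ⟨hu0, hu1⟩ := hu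
  fin_cases m <;>
    · norm_num [psiPt, sPatch, pu, Fin.sum_univ_succ, Fin.last, Fin.ext_iff.not]
      nlinarith

lemma psi_perm (α u : ℝ) (σ : Equiv.Perm (Fin 3)) (m : Fin 3) :
    psiPt α u σ (σ m) = psiPt α u (Equiv.refl (Fin 3)) m := by
  simp [psiPt, sPatch, Equiv.apply_eq_iff_eq]
  split_ifs <;> simp_all

lemma sum_dHvec (q p : Fin 3 → ℝ) (i j : Fin 3) :
    ∑ m, dHvec q i j m / p m = ((q i + q j) / 2) * (1 / p i - 1 / p j) := by
  fin_cases i <;> fin_cases j <;>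
    simp [dHvec, Zvec, Fin.sum_univ_three] <;> ring

lemma real_sign_mul_abs (x : ℝ) : Real.sign x * |x| = x := by
  rcases lt_trichotomy x 0 with h | h | h
  · rw [Real.sign_of_neg h, abs_of_neg h]; ring
  · simp [h]
  · rw [Real.sign_of_pos h, abs_of_pos h]; ring

lemma key_sign (u' : ℝ) (h0 : 0 < u') (h1 : u' < 1) :
    Real.sign (2 * u' - 1) * Real.sqrt (As 1 (pu u') (Zvec 1 0) (Zvec 1 0)) =
      (2 * u' - 1) / (2 * u' * (1 - u')) := by
  have h0' : u' ≠ 0 := ne_of_gt h0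
  have h1' : (1 : ℝ) - u' ≠ 0 := by linarith
  have hA : As 1 (pu u') (Zvec 1 0) (Zvec 1 0) = ((1 - 2 * u') / (2 * u' * (1 - u'))) ^ 2 := by
    simp only [As, pu, Zvec, Fin.sum_univ_succ, Finset.univ_unique, Finset.sum_singleton]
    norm_num [Fin.ext_iff]
    field_simp
    ring
  rw [hA, Real.sqrt_sq_eq_abs]
  have hd : 0 < 2 * u' * (1 - u') := by nlinarith
  rw [abs_div, abs_of_pos hd, abs_sub_comm, ← mul_div_assoc, real_sign_mul_abs]

lemma pair_eq (a b : ℝ) (ha : 0 < a) (hb : 0 < b) :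
    Real.sign (2 * (a / (a + b)) - 1) *
        Real.sqrt (As 1 (pu (a / (a + b))) (Zvec 1 0) (Zvec 1 0)) =
      -((a + b) / 2 * (1 / a - 1 / b)) := by
  have hab : 0 < a + b := by linarith
  have h0 : 0 < a / (a + b) := div_pos ha hab
  have h1 : a / (a + b) < 1 := (div_lt_one hab).2 (by linarith)
  rw [key_sign _ h0 h1]
  field_simp
  ring_nf
  field_simp
  ring

theorem As_satisfies_C2 : CondC2 (As 1) (As 2) := by
  refine ⟨?_, ?_, ?_⟩
  · intro p _ X _
    exact mul_self_nonneg _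
  · refine ⟨![1, -1], ?_, ?_, ?_⟩
    · simp [Tang, Fin.sum_univ_two]
    · intro h
      have := congrFun h 0
      norm_num at this
    · intro Y _
      have h : (∑ i, (![1, -1] : Fin 2 → ℝ) i / bunif 1 i) = 0 := by
        norm_num [bunif, Fin.sum_univ_succ]
      simp only [As]
      rw [show (∑ i, (![1, -1] : Fin 2 → ℝ) i / bunif 1 i) = 0 from h, zero_mul]
  · intro α hα u hu σ i j k l hij hkl
    set q : Fin 3 → ℝ := psiPt α u (Equiv.refl (Fin 3)) with hqdef
    have hq : ∀ m, 0 < q m := psi_refl_pos α u hα hu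
    have hperm : ∀ m, psiPt α u σ (σ m) = q m := psi_perm α u σ
    have huij : uRatio α u i j = q i / (q i + q j) := rfl
    have hukl : uRatio α u k l = q k / (q k + q l) := rfl
    have hsum : ∀ a b : Fin 3,
        (∑ m, dHvec (psiPt α u σ) (σ a) (σ b) m / psiPt α u σ m) =
          ((q a + q b) / 2) * (1 / q a - 1 / q b) := by
      intro a b
      rw [sum_dHvec, hperm, hperm]
    show (∑ m, dHvec (psiPt α u σ) (σ i) (σ j) m / psiPt α u σ m) *
        (∑ m, dHvec (psiPt α u σ) (σ k) (σ l) m / psiPt α u σ m) = _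
    rw [hsum, hsum, huij, hukl, pair_eq _ _ (hq i) (hq j), pair_eq _ _ (hq k) (hq l)]
    ring
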